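/- arXiv:1801.09512 — 2 statements merged into one kernel-verified Lean document; each statement's English description precedes it below -/
import Mathlib

section
/- The Mellin transform of the modified Bessel function K₀ is given by (ℳK₀)(s) = ∫₀^∞ y^{s−1} K₀(y) dy = 2^{s−2} Γ(s/2)² for all real (or complex) s with Re s > 0. -/
open Real Set MeasureTheory

section MellinK0Aux

lemma cpow_ofReal_rpow {c : ℝ} (hc : 0 < c) (r : ℝ) (w : ℂ) :
    ((c ^ r : ℝ) : ℂ) ^ w = (c : ℂ) ^ ((r : ℂ) * w) := by
  rw [Complex.cpow_def_of_ne_zero (by exact_mod_cast (Real.rpow_pos_of_pos hc r).ne'),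
      Complex.cpow_def_of_ne_zero (by exact_mod_cast hc.ne'),
      ← Complex.ofReal_log (Real.rpow_pos_of_pos hc r).le, Real.log_rpow hc,
      ← Complex.ofReal_log hc.le]
  congr 1
  push_cast
  ring

lemma gamma_integrand_integrable {s : ℂ} (hs : 0 < s.re) {r : ℝ} (hr : 0 < r) :
    IntegrableOn (fun y : ℝ => (y : ℂ) ^ (s - 1) * Real.exp (-(r * y))) (Ioi 0) := by
  have h := Complex.GammaIntegral_convergent hs
  rw [← mul_zero r, ← integrableOn_Ioi_comp_mul_left_iff _ _ hr] at h
  have hr' : (r : ℂ) ≠ 0 := Complex.ofReal_ne_zero.mpr hr.ne'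
  refine IntegrableOn.congr_fun (h.const_mul ((r : ℂ) ^ (1 - s))) (fun t ht => ?_)
    measurableSet_Ioi
  replace ht : 0 < t := ht
  rw [Complex.ofReal_mul, Complex.mul_cpow_ofReal_nonneg hr.le ht.le, show
      (r:ℂ) ^ (1-s) * (↑(Real.exp (-(r * t))) * ((r:ℂ) ^ (s-1) * (t:ℂ) ^ (s-1))) =
      ((r:ℂ) ^ (1-s) * (r:ℂ) ^ (s-1)) * ((t:ℂ) ^ (s-1) * ↑(Real.exp (-(r*t)))) from by ring,
    ← Complex.cpow_add _ _ hr', show (1-s)+(s-1) = 0 from by ring, Complex.cpow_zero, one_mul]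

lemma image_tanhsq : (fun t : ℝ => (Real.sinh t / Real.cosh t) ^ 2) '' Ioi 0 = Ioo 0 1 := by
  ext v
  simp only [mem_image, mem_Ioi, mem_Ioo]
  constructor
  · rintro ⟨t, ht, rfl⟩
    have hc := Real.cosh_pos t
    have hsn : 0 < Real.sinh t := Real.sinh_pos_iff.mpr ht
    refine ⟨by positivity, ?_⟩
    rw [div_pow, div_lt_one (by positivity)]
    nlinarith [Real.cosh_sq_sub_sinh_sq t]
  · rintro ⟨hv0, hv1⟩
    have h1v : 0 < 1 - v := by linarith
    set x := Real.sqrt (v / (1 - v)) with hx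
    have hxpos : 0 < x := Real.sqrt_pos.mpr (by positivity)
    refine ⟨Real.arsinh x, Real.arsinh_pos_iff.mpr hxpos, ?_⟩
    have hsx : Real.sinh (Real.arsinh x) = x := Real.sinh_arsinh x
    have hc2 : Real.cosh (Real.arsinh x) ^ 2 = 1 + x ^ 2 := by
      nlinarith [Real.cosh_sq_sub_sinh_sq (Real.arsinh x)]
    have hxsq : x ^ 2 = v / (1 - v) := Real.sq_sqrt (by positivity)
    rw [div_pow, hsx, hc2, hxsq]
    field_simp
    ring

lemma injOn_tanhsq : InjOn (fun t : ℝ => (Real.sinh t / Real.cosh t) ^ 2) (Ioi 0) := by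
  intro a ha b hb hab
  simp only [mem_Ioi] at ha hb
  simp only at hab
  have ha' : 0 < Real.sinh a / Real.cosh a :=
    div_pos (Real.sinh_pos_iff.mpr ha) (Real.cosh_pos a)
  have hb' : 0 < Real.sinh b / Real.cosh b :=
    div_pos (Real.sinh_pos_iff.mpr hb) (Real.cosh_pos b)
  have hdiv : Real.sinh a / Real.cosh a = Real.sinh b / Real.cosh b := by nlinarith
  have h2 : Real.sinh a * Real.cosh b = Real.sinh b * Real.cosh a := by
    rw [div_eq_div_iff (Real.cosh_pos a).ne' (Real.cosh_pos b).ne'] at hdiv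
    linarith
  have h3 : Real.sinh (a - b) = 0 := by rw [Real.sinh_sub]; linarith
  have := Real.sinh_eq_zero.mp h3
  linarith

lemma hasDeriv_tanhsq (t : ℝ) : HasDerivAt (fun t : ℝ => (Real.sinh t / Real.cosh t) ^ 2)
    (2 * (Real.sinh t / Real.cosh t) * (Real.cosh t ^ 2)⁻¹) t := by
  have h := ((Real.hasDerivAt_sinh t).div (Real.hasDerivAt_cosh t) (Real.cosh_pos t).ne')
  have h2 := h.pow 2
  refine h2.congr_deriv ?_
  have hid : Real.cosh t * Real.cosh t - Real.sinh t * Real.sinh t = 1 := by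
    nlinarith [Real.cosh_sq_sub_sinh_sq t]
  rw [hid]
  norm_num

lemma beta_eq (s : ℂ) :
    ∫ v in Ioo (0:ℝ) 1, (v:ℂ) ^ ((1/2:ℂ)-1) * ((1:ℂ)-(v:ℂ)) ^ (s/2-1)
      = 2 * ∫ t in Ioi (0:ℝ), ((Real.cosh t : ℝ):ℂ) ^ (-s) := by
  rw [← image_tanhsq, integral_image_eq_integral_abs_deriv_smul measurableSet_Ioi
      (fun t _ => (hasDeriv_tanhsq t).hasDerivWithinAt) injOn_tanhsq,
      ← MeasureTheory.integral_const_mul]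
  refine setIntegral_congr_fun measurableSet_Ioi (fun t ht => ?_)
  simp only [mem_Ioi] at ht
  set a := Real.sinh t
  set c := Real.cosh t with hcdef
  have hc : 0 < c := Real.cosh_pos t
  have ha : 0 < a := Real.sinh_pos_iff.mpr ht
  have hac : 0 < a / c := div_pos ha hc
  have hc' : (c : ℂ) ≠ 0 := Complex.ofReal_ne_zero.mpr hc.ne'
  have hid : c ^ 2 - a ^ 2 = 1 := Real.cosh_sq_sub_sinh_sq t
  have e1 : (((a/c)^2 : ℝ) : ℂ) ^ ((1/2:ℂ)-1) = ((a/c : ℝ) : ℂ)⁻¹ := by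
    rw [← Real.rpow_natCast (a/c) 2, cpow_ofReal_rpow hac,
      show ((((2:ℕ):ℝ)):ℂ) * ((1/2:ℂ)-1) = -1 by push_cast; ring, Complex.cpow_neg_one]
  have h1 : 1 - (a/c)^2 = c ^ (-2 : ℝ) := by
    rw [Real.rpow_neg hc.le, show ((2:ℝ)) = ((2:ℕ):ℝ) by norm_num, Real.rpow_natCast]
    field_simp
    linarith
  have e2 : ((c ^ (-2:ℝ) : ℝ) : ℂ) ^ (s/2-1) = (c:ℂ) ^ ((2:ℂ) - s) := by
    rw [cpow_ofReal_rpow hc, show (((-2:ℝ)):ℂ) * (s/2-1) = 2 - s by push_cast; ring]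
  rw [show (1:ℂ) - ((((a/c)^2 : ℝ)):ℂ) = ((1 - (a/c)^2 : ℝ) : ℂ) by push_cast; ring,
      h1, e1, e2, abs_of_pos (by positivity),
      show (2:ℂ) - s = ((2:ℕ):ℂ) + (-s) by push_cast; ring,
      Complex.cpow_add _ _ hc', Complex.cpow_natCast, Complex.real_smul]
  have hK : ((2*(a/c)*((c:ℝ)^2)⁻¹ : ℝ) : ℂ) * (((a/c : ℝ)):ℂ)⁻¹ * ((c:ℂ))^(2:ℕ) = 2 := by
    have ha' : (a:ℂ) ≠ 0 := Complex.ofReal_ne_zero.mpr ha.ne'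
    push_cast
    field_simp
  linear_combination ((c:ℂ) ^ (-s)) * hK

lemma fubini_int {s : ℂ} (hs : 0 < s.re) :
    Integrable (Function.uncurry fun y t : ℝ => (y:ℂ)^(s-1) * (Real.exp (-y * Real.cosh t) : ℂ))
      ((volume.restrict (Ioi 0)).prod (volume.restrict (Ioi 0))) := by
  have hmeas : AEStronglyMeasurable
      (Function.uncurry fun y t : ℝ => (y:ℂ)^(s-1) * (Real.exp (-y * Real.cosh t) : ℂ))
      ((volume.restrict (Ioi 0)).prod (volume.restrict (Ioi 0))) := by
    rw [Measure.prod_restrict]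
    refine ContinuousOn.aestronglyMeasurable ?_ (measurableSet_Ioi.prod measurableSet_Ioi)
    refine ContinuousOn.mul ?_ (Continuous.continuousOn (by fun_prop))
    intro p hp
    refine ContinuousAt.continuousWithinAt ?_
    exact (continuousAt_cpow_const (Complex.mem_slitPlane_iff.mpr
        (Or.inl (by simpa using hp.1)))).comp
      (Complex.continuous_ofReal.continuousAt.comp continuousAt_fst)
  rw [integrable_prod_iff' hmeas]
  constructor
  · filter_upwards [ae_restrict_mem measurableSet_Ioi] with t ht
    have h := gamma_integrand_integrable hs (Real.cosh_pos t)
    simpa only [Function.uncurry_apply_pair, IntegrableOn, show ∀ y : ℝ, -(Real.cosh t * y) = -y * Real.cosh t from fun y => by ring]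
      using h
  · have heq : ∀ t ∈ Ioi (0:ℝ),
        (∫ y in Ioi (0:ℝ), ‖(y:ℂ)^(s-1) * (Real.exp (-y * Real.cosh t) : ℂ)‖)
          = (1 / Real.cosh t) ^ s.re * Real.Gamma s.re := by
      intro t ht
      rw [← Real.integral_rpow_mul_exp_neg_mul_Ioi hs (Real.cosh_pos t)]
      refine setIntegral_congr_fun measurableSet_Ioi (fun y hy => ?_)
      replace hy : 0 < y := hy
      rw [norm_mul, Complex.norm_cpow_eq_rpow_re_of_pos hy,
        Complex.norm_real, Real.norm_eq_abs, abs_of_pos (Real.exp_pos _), Complex.sub_re,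
        Complex.one_re]
      congr 1
      ring
    have hg : Integrable (fun t : ℝ => (1 / Real.cosh t) ^ s.re * Real.Gamma s.re)
        (volume.restrict (Ioi 0)) := by
      refine Integrable.mono'
        (g := fun t => (2:ℝ) ^ s.re * Real.exp (-s.re * t) * Real.Gamma s.re)
        (((exp_neg_integrableOn_Ioi 0 hs).const_mul ((2:ℝ) ^ s.re)).mul_const _) ?_ ?_
      · refine Continuous.aestronglyMeasurable ?_
        refine Continuous.mul ?_ continuous_const
        exact (continuous_const.div Real.continuous_cosh
          (fun x => (Real.cosh_pos x).ne')).rpow_const (fun x => Or.inr hs.le)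
      · filter_upwards [ae_restrict_mem measurableSet_Ioi] with t ht
        replace ht : 0 < t := ht
        have hc := Real.cosh_pos t
        have hΓ : 0 < Real.Gamma s.re := Real.Gamma_pos_of_pos hs
        have hcosh : Real.exp t / 2 ≤ Real.cosh t := by
          rw [Real.cosh_eq]
          have := (Real.exp_pos (-t)).le
          linarith
        have h2 : 1 / Real.cosh t ≤ 2 * Real.exp (-t) := by
          rw [div_le_iff₀ hc, Real.exp_neg]
          have he := Real.exp_pos t
          rw [show 2 * (Real.exp t)⁻¹ * Real.cosh t
              = (2 * Real.cosh t / Real.exp t) from by ring, le_div_iff₀ he]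
          linarith
        have h3 : (1 / Real.cosh t) ^ s.re ≤ (2 * Real.exp (-t)) ^ s.re :=
          Real.rpow_le_rpow (by positivity) h2 hs.le
        have h4 : (2 * Real.exp (-t)) ^ s.re = 2 ^ s.re * Real.exp (-s.re * t) := by
          rw [Real.mul_rpow (by norm_num) (Real.exp_pos _).le, ← Real.exp_mul]
          ring_nf
        rw [norm_mul, Real.norm_eq_abs, Real.norm_eq_abs, abs_of_pos hΓ,
          abs_of_pos (by positivity : (0:ℝ) < (1 / Real.cosh t) ^ s.re)]
        rw [h4] at h3
        exact mul_le_mul_of_nonneg_right h3 hΓ.le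
    refine hg.congr ?_
    filter_upwards [ae_restrict_mem measurableSet_Ioi] with t ht using (heq t ht).symm

end MellinK0Aux

/-- Modified Bessel function K₀ via its integral representation. -/
noncomputable def K0 (x : ℝ) : ℝ := ∫ t in Set.Ioi (0:ℝ), Real.exp (-x * Real.cosh t)

/-- Mellin transform of a real function. -/
noncomputable def mellinT (F : ℝ → ℝ) (s : ℂ) : ℂ :=
  ∫ y in Set.Ioi (0:ℝ), (y:ℂ)^(s-1) * (F y : ℂ)

/-- The Mellin transform of K₀: (ℳK₀)(s) = 2^{s−2} Γ(s/2)² for Re s > 0. -/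
theorem mellin_K0 (s : ℂ) (hs : 0 < s.re) :
    mellinT K0 s = (2:ℂ)^(s-2) * (Complex.Gamma (s/2))^2 := by
  have hre2 : (s / 2).re = s.re / 2 := by
    rw [show s / 2 = s * (1/2 : ℝ) from by push_cast; ring, Complex.mul_re]
    simp
    ring
  -- Step 1: double integral
  have h1 : mellinT K0 s = ∫ y in Ioi (0:ℝ), ∫ t in Ioi (0:ℝ),
      (y:ℂ)^(s-1) * (Real.exp (-y * Real.cosh t) : ℂ) := by
    refine setIntegral_congr_fun measurableSet_Ioi (fun y _ => ?_)
    rw [show ((K0 y : ℝ) : ℂ) = ∫ t in Ioi (0:ℝ), (Real.exp (-y * Real.cosh t) : ℂ) from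
      integral_ofReal.symm, ← MeasureTheory.integral_const_mul]
  -- Step 2: swap
  rw [h1, MeasureTheory.integral_integral_swap (fubini_int hs)]
  -- Step 3: inner integral
  have h3 : ∀ t ∈ Ioi (0:ℝ), (∫ y in Ioi (0:ℝ), (y:ℂ)^(s-1) * (Real.exp (-y * Real.cosh t):ℂ))
      = ((Real.cosh t : ℝ):ℂ)^(-s) * Complex.Gamma s := by
    intro t ht
    have hc := Real.cosh_pos t
    have heq : (∫ y in Ioi (0:ℝ), (y:ℂ)^(s-1) * (Real.exp (-y * Real.cosh t):ℂ))
        = ∫ y in Ioi (0:ℝ), (y:ℂ)^(s-1) * Complex.exp (-(Real.cosh t * y)) := by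
      refine setIntegral_congr_fun measurableSet_Ioi (fun y _ => ?_)
      congr 1
      rw [Complex.ofReal_exp]
      congr 1
      push_cast
      ring
    rw [heq, Complex.integral_cpow_mul_exp_neg_mul_Ioi hs hc, one_div,
      Complex.inv_cpow _ _ (by rw [Complex.arg_ofReal_of_nonneg hc.le]; exact pi_ne_zero.symm),
      ← Complex.cpow_neg]
  rw [setIntegral_congr_fun measurableSet_Ioi h3, MeasureTheory.integral_mul_const]
  -- Step 5: beta integral
  have hbeta : Complex.betaIntegral (1/2) (s/2)
      = 2 * ∫ t in Ioi (0:ℝ), ((Real.cosh t:ℝ):ℂ)^(-s) := by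
    rw [← beta_eq, Complex.betaIntegral, intervalIntegral.integral_of_le zero_le_one,
      MeasureTheory.integral_Ioc_eq_integral_Ioo]
  -- Step 6: Gamma algebra
  have hsre2 : 0 < (s/2).re := by rw [hre2]; linarith
  have hhalf : (0:ℝ) < ((1:ℂ)/2).re := by norm_num
  have hG := Complex.Gamma_mul_Gamma_eq_betaIntegral hhalf hsre2
  have hΓh : Complex.Gamma (1/2 + s/2) ≠ 0 := by
    refine Complex.Gamma_ne_zero_of_re_pos ?_
    rw [Complex.add_re, hre2]
    norm_num
    linarith
  have hdup := Complex.Gamma_mul_Gamma_add_half (s/2)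
  rw [show 2 * (s/2) = s from by ring] at hdup
  have hsqrt : ((Real.sqrt π : ℝ):ℂ) = ((π:ℝ):ℂ)^((1:ℂ)/2) := by
    rw [Real.sqrt_eq_rpow, Complex.ofReal_cpow Real.pi_pos.le]
    norm_num
  rw [Complex.Gamma_one_half_eq, ← hsqrt] at hG
  have hΓs : Complex.Gamma s ≠ 0 := Complex.Gamma_ne_zero_of_re_pos hs
  have hΓs2 : Complex.Gamma (s/2) ≠ 0 := Complex.Gamma_ne_zero_of_re_pos hsre2
  have hpi : ((Real.sqrt π : ℝ):ℂ) ≠ 0 := by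
    exact_mod_cast (Real.sqrt_pos.mpr Real.pi_pos).ne'
  have h2s : (2:ℂ)^(s-2) * (2:ℂ)^(1-s) = 1/2 := by
    rw [← Complex.cpow_add _ _ (by norm_num : (2:ℂ) ≠ 0),
      show s - 2 + (1 - s) = -1 from by ring, Complex.cpow_neg_one]
    norm_num
  -- mellin = (beta/2) * Γ s ; conclude
  have hIbeta : (∫ t in Ioi (0:ℝ), ((Real.cosh t:ℝ):ℂ)^(-s))
      = Complex.betaIntegral (1/2) (s/2) / 2 := by
    rw [hbeta]; ring
  rw [hIbeta]
  rw [show s/2 + 1/2 = 1/2 + s/2 from by ring] at hdup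
  have hb2 : Complex.betaIntegral (1/2) (s/2)
      = ((Real.sqrt π : ℝ):ℂ) * Complex.Gamma (s/2) / Complex.Gamma (1/2 + s/2) := by
    rw [eq_div_iff hΓh]
    linear_combination -hG
  rw [hb2]
  set G := Complex.Gamma (1/2 + s/2) with hGdef
  set G2 := Complex.Gamma (s/2) with hG2def
  rw [div_div, div_mul_eq_mul_div, div_eq_iff (mul_ne_zero hΓh two_ne_zero)]
  linear_combination (-(2 * (2:ℂ)^(s-2) * Complex.Gamma (s/2))) * hdup
    + (-(2 * ((Real.sqrt π : ℝ):ℂ) * Complex.Gamma (s/2) * Complex.Gamma s)) * h2s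
end

section
/- If f : ℝ² → ℝ is continuous, compactly supported, and vanishes at all points x(ξ, η) with η ≥ η₀ (i.e., f is supported inside the parabola 𝒫_{η₀}), then for any k > 0 and ξ ∈ ℝ, ∫₀^∞ (ℛf)(x(ξ, η₀), r) K₀(kr) dr = ∫₀^{η₀} ∫_{−∞}^{∞} f*(ξ', η') K₀(k · ρ(ξ, η₀, ξ', η')) dξ' dη', where f*(ξ', η') = (ξ'² + η'²) f(x(ξ', η')). -/
open Real Set MeasureTheory

/-- Parabolic coordinates in the plane. -/
noncomputable def pcoord (ξ η : ℝ) : ℝ × ℝ := ((ξ^2 - η^2)/2, ξ*η)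

/-- Euclidean distance on ℝ². -/
noncomputable def edist2 (a b : ℝ × ℝ) : ℝ := Real.sqrt ((a.1-b.1)^2 + (a.2-b.2)^2)

/-- Spherical mean transform in the plane. -/
noncomputable def sphMean (f : ℝ × ℝ → ℝ) (x : ℝ × ℝ) (r : ℝ) : ℝ :=
  ∫ θ in (-Real.pi)..Real.pi, f (x.1 + r * Real.cos θ, x.2 + r * Real.sin θ) * r

/-! ### Elementary estimates for `K0` -/

lemma one_add_sq_div_two_le_cosh (t : ℝ) : 1 + t^2/2 ≤ Real.cosh t := by
  have h : Real.cosh t = 1 + 2 * Real.sinh (t/2)^2 := by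
    have := Real.cosh_two_mul (t/2)
    have h2 := Real.cosh_sq (t/2)
    rw [show 2 * (t/2) = t by ring] at this
    rw [this, h2]; ring
  rw [h]
  have : (t/2)^2 ≤ Real.sinh (t/2)^2 := by
    rcases le_total 0 (t/2) with h0 | h0
    · have := Real.self_le_sinh_iff.mpr h0
      nlinarith [Real.sinh_nonneg_iff.mpr h0]
    · have h1 : Real.sinh (t/2) ≤ t/2 := by
        have := Real.self_le_sinh_iff.mpr (by linarith : (0:ℝ) ≤ -(t/2))
        rw [Real.sinh_neg] at this; linarith
      nlinarith [Real.sinh_nonpos_iff.mpr h0]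
  nlinarith

lemma exp_cosh_bound {x : ℝ} (hx : 0 < x) (t : ℝ) :
    Real.exp (-x * Real.cosh t) ≤ Real.exp (-x) * Real.exp (-(x/2) * t^2) := by
  rw [← Real.exp_add]
  apply Real.exp_le_exp.2
  have := one_add_sq_div_two_le_cosh t
  nlinarith

lemma integrable_K0_bound {x : ℝ} (hx : 0 < x) :
    Integrable (fun t : ℝ => Real.exp (-x) * Real.exp (-(x/2) * t^2)) :=
  (integrable_exp_neg_mul_sq (by linarith : (0:ℝ) < x/2)).const_mul _

lemma integrable_exp_cosh {x : ℝ} (hx : 0 < x) :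
    IntegrableOn (fun t : ℝ => Real.exp (-x * Real.cosh t)) (Set.Ioi 0) := by
  apply Integrable.mono' (integrable_K0_bound hx).integrableOn
  · exact (Real.continuous_exp.comp
      (continuous_const.mul Real.continuous_cosh)).aestronglyMeasurable
  · filter_upwards with t
    rw [Real.norm_eq_abs, abs_of_pos (Real.exp_pos _)]
    exact exp_cosh_bound hx t

lemma K0_nonneg (x : ℝ) : 0 ≤ K0 x :=
  integral_nonneg fun _ => (Real.exp_pos _).le

lemma K0_le {x : ℝ} (hx : 0 < x) : K0 x ≤ Real.exp (-x) * Real.sqrt (2*π/x) := by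
  have h1 : K0 x ≤ ∫ t in Set.Ioi (0:ℝ), Real.exp (-x) * Real.exp (-(x/2) * t^2) := by
    apply integral_mono (integrable_exp_cosh hx) (integrable_K0_bound hx).integrableOn
    intro t; exact exp_cosh_bound hx t
  have h2 : ∫ t in Set.Ioi (0:ℝ), Real.exp (-x) * Real.exp (-(x/2) * t^2)
      ≤ Real.exp (-x) * Real.sqrt (2*π/x) := by
    rw [integral_const_mul]
    apply mul_le_mul_of_nonneg_left _ (Real.exp_pos _).le
    have h3 : (∫ t in Set.Ioi (0:ℝ), Real.exp (-(x/2) * t^2)) ≤ ∫ t : ℝ, Real.exp (-(x/2) * t^2) :=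
      setIntegral_le_integral (integrable_exp_neg_mul_sq (by linarith))
        (Filter.Eventually.of_forall fun t => (Real.exp_pos _).le)
    have h4 : (∫ t : ℝ, Real.exp (-(x/2) * t^2)) = Real.sqrt (π / (x/2)) :=
      integral_gaussian (x/2)
    rw [h4] at h3
    have : π / (x/2) = 2*π/x := by field_simp
    rw [this] at h3; exact h3
  linarith

lemma K0_mul_self_le {r : ℝ} (hr : 0 < r) {k : ℝ} (hk : 0 < k) :
    K0 (k*r) * r ≤ Real.sqrt (2*π/k) * Real.sqrt r := by
  have hkr : 0 < k*r := mul_pos hk hr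
  have h1 : K0 (k*r) ≤ Real.sqrt (2*π/(k*r)) := by
    calc K0 (k*r) ≤ Real.exp (-(k*r)) * Real.sqrt (2*π/(k*r)) := K0_le hkr
    _ ≤ 1 * Real.sqrt (2*π/(k*r)) := by
        apply mul_le_mul_of_nonneg_right _ (Real.sqrt_nonneg _)
        exact Real.exp_le_one_iff.mpr (by linarith)
    _ = Real.sqrt (2*π/(k*r)) := one_mul _
  calc K0 (k*r) * r ≤ Real.sqrt (2*π/(k*r)) * r := by
        apply mul_le_mul_of_nonneg_right h1 hr.le
  _ = Real.sqrt (2*π/k) * Real.sqrt r := by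
      rw [show 2*π/(k*r) = (2*π/k) * (1/r) by field_simp,
        Real.sqrt_mul (by positivity) (1/r), one_div, Real.sqrt_inv]
      rw [mul_assoc, inv_mul_eq_div, Real.div_sqrt]

lemma K0_continuousOn : ContinuousOn K0 (Set.Ioi 0) := by
  intro x₀ hx₀
  apply ContinuousAt.continuousWithinAt
  simp only [Set.mem_Ioi] at hx₀
  have hmem : Set.Ioi (x₀/2) ∈ nhds x₀ := Ioi_mem_nhds (by linarith)
  apply MeasureTheory.continuousAt_of_dominated
    (bound := fun t => Real.exp (-(x₀/2)) * Real.exp (-(x₀/4) * t^2))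
  · filter_upwards with x
    exact (Real.continuous_exp.comp
      (continuous_const.mul Real.continuous_cosh)).aestronglyMeasurable
  · filter_upwards [hmem] with x hx
    filter_upwards with t
    rw [Real.norm_eq_abs, abs_of_pos (Real.exp_pos _)]
    have h1 : Real.exp (-x * Real.cosh t) ≤ Real.exp (-(x₀/2) * Real.cosh t) := by
      apply Real.exp_le_exp.2
      have h2 := Real.one_le_cosh t
      simp only [Set.mem_Ioi] at hx
      nlinarith
    refine h1.trans ?_
    rw [← Real.exp_add]
    apply Real.exp_le_exp.2
    have := one_add_sq_div_two_le_cosh t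
    nlinarith
  · exact ((integrable_exp_neg_mul_sq (by linarith : (0:ℝ) < x₀/4)).const_mul
      _).integrableOn
  · filter_upwards with t
    exact (Real.continuous_exp.comp
      ((continuous_neg.mul continuous_const).comp continuous_id)).continuousAt

/-! ### The parabolic coordinate map -/

/-- derivative of `(η,ξ) ↦ pcoord ξ η` -/
noncomputable def DPhi (p : ℝ × ℝ) : ℝ × ℝ →L[ℝ] ℝ × ℝ :=
  LinearMap.toContinuousLinearMap (Matrix.toLin (Module.Basis.finTwoProd ℝ) (Module.Basis.finTwoProd ℝ)
    !![-p.1, p.2; p.2, p.1])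

lemma hasFDerivAt_Phi (p : ℝ × ℝ) :
    HasFDerivAt (fun q : ℝ × ℝ => pcoord q.2 q.1) (DPhi p) p := by
  unfold DPhi pcoord
  rw [Matrix.toLin_finTwoProd_toContinuousLinearMap]
  have h1 : HasFDerivAt (fun q : ℝ × ℝ => (q.2^2 - q.1^2)/2)
      ((-p.1) • ContinuousLinearMap.fst ℝ ℝ ℝ + p.2 • ContinuousLinearMap.snd ℝ ℝ ℝ) p := by
    have := ((hasFDerivAt_snd (𝕜 := ℝ) (E := ℝ) (F := ℝ) (p := p)).mul
      (hasFDerivAt_snd (p := p))).sub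
      ((hasFDerivAt_fst (𝕜 := ℝ) (E := ℝ) (F := ℝ) (p := p)).mul (hasFDerivAt_fst (p := p)))
    have h2 := this.const_mul (1/2)
    refine (h2.congr_fderiv ?_).congr_of_eventuallyEq (Filter.Eventually.of_forall fun q => ?_)
    · refine ContinuousLinearMap.ext fun q => ?_
      simp only [ContinuousLinearMap.add_apply, ContinuousLinearMap.coe_smul', Pi.smul_apply,
        ContinuousLinearMap.coe_fst', ContinuousLinearMap.coe_snd', smul_eq_mul,
        ContinuousLinearMap.coe_sub', Pi.sub_apply, ContinuousLinearMap.sub_apply]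
      ring
    · simp only [Pi.mul_apply, Pi.sub_apply]; ring
  have h2 : HasFDerivAt (fun q : ℝ × ℝ => q.2 * q.1)
      (p.2 • ContinuousLinearMap.fst ℝ ℝ ℝ + p.1 • ContinuousLinearMap.snd ℝ ℝ ℝ) p := by
    have := (hasFDerivAt_snd (𝕜 := ℝ) (E := ℝ) (F := ℝ) (p := p)).mul
      (hasFDerivAt_fst (p := p))
    exact this
  exact h1.prodMk h2

lemma DPhi_det (p : ℝ × ℝ) : (DPhi p).det = -(p.1^2 + p.2^2) := by
  unfold DPhi
  rw [ContinuousLinearMap.det, LinearMap.coe_toContinuousLinearMap, LinearMap.det_toLin,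
    Matrix.det_fin_two_of]
  ring

noncomputable def uu (y : ℝ × ℝ) : ℝ := Real.sqrt (y.1^2 + y.2^2) - y.1

lemma uu_nonneg (y : ℝ × ℝ) : 0 ≤ uu y := by
  have h : |y.1| ≤ Real.sqrt (y.1^2 + y.2^2) := by
    rw [← Real.sqrt_sq_eq_abs]
    exact Real.sqrt_le_sqrt (by nlinarith)
  have := abs_le.1 h
  unfold uu; linarith [this.2]

lemma uu_eq_zero {y : ℝ × ℝ} (h : uu y = 0) : y.2 = 0 := by
  unfold uu at h
  have h1 : Real.sqrt (y.1^2 + y.2^2) = y.1 := by linarith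
  have h2 : y.1^2 + y.2^2 = y.1^2 := by
    rw [← Real.sq_sqrt (by positivity : (0:ℝ) ≤ y.1^2 + y.2^2), h1]
  nlinarith

lemma uu_pcoord (ξ η : ℝ) : uu (pcoord ξ η) = η^2 := by
  unfold uu pcoord
  have : (((ξ^2 - η^2)/2)^2 + (ξ*η)^2) = ((ξ^2+η^2)/2)^2 := by ring
  rw [this, Real.sqrt_sq (by positivity)]
  ring

lemma pcoord_rep (y : ℝ × ℝ) (h : 0 < uu y) :
    pcoord (y.2 / Real.sqrt (uu y)) (Real.sqrt (uu y)) = y := by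
  set s := Real.sqrt (y.1^2 + y.2^2) with hs
  have hs2 : s^2 = y.1^2 + y.2^2 := Real.sq_sqrt (by positivity)
  have hη2 : (Real.sqrt (uu y))^2 = uu y := Real.sq_sqrt (uu_nonneg y)
  have hηpos : 0 < Real.sqrt (uu y) := Real.sqrt_pos.2 h
  have hb2 : y.2^2 = uu y * (s + y.1) := by
    have : uu y = s - y.1 := rfl
    nlinarith
  unfold pcoord
  have hne : Real.sqrt (uu y) ≠ 0 := ne_of_gt hηpos
  refine Prod.ext ?_ ?_
  · show ((y.2 / Real.sqrt (uu y))^2 - (Real.sqrt (uu y))^2)/2 = y.1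
    rw [div_pow, hη2]
    rw [div_sub' (ne_of_gt h)]
    rw [hb2]
    have huy : uu y = s - y.1 := rfl
    field_simp
    nlinarith
  · show (y.2 / Real.sqrt (uu y)) * Real.sqrt (uu y) = y.2
    field_simp

lemma pcoord_injOn {η₀ : ℝ} :
    InjOn (fun q : ℝ × ℝ => pcoord q.2 q.1) (Ioo 0 η₀ ×ˢ (univ : Set ℝ)) := by
  rintro ⟨η, ξ⟩ ⟨hη, -⟩ ⟨η', ξ'⟩ ⟨hη', -⟩ heq
  simp only [pcoord, Prod.mk.injEq] at heq
  obtain ⟨h1, h2⟩ := heq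
  have hη0 : 0 < η := hη.1
  have hη'0 : 0 < η' := hη'.1
  have e1 : ξ^2 - η^2 = ξ'^2 - η'^2 := by linarith
  have key : (ξ^2+η^2)^2 = (ξ'^2+η'^2)^2 := by
    calc (ξ^2+η^2)^2 = (ξ^2-η^2)^2 + 4*(ξ*η)^2 := by ring
    _ = (ξ'^2-η'^2)^2 + 4*(ξ'*η')^2 := by rw [e1, h2]
    _ = (ξ'^2+η'^2)^2 := by ring
  have hsum : ξ^2 + η^2 = ξ'^2 + η'^2 := by
    have h3 : |ξ^2+η^2| = |ξ'^2+η'^2| := by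
      rw [← Real.sqrt_sq_eq_abs, ← Real.sqrt_sq_eq_abs, key]
    rwa [abs_of_nonneg (by positivity), abs_of_nonneg (by positivity)] at h3
  have hηη : η = η' := by nlinarith
  have hξ : ξ = ξ' := by
    subst hηη
    exact mul_right_cancel₀ (ne_of_gt hη0) h2
  simp [hξ, hηη]

lemma image_Phi {η₀ : ℝ} (hη₀ : 0 < η₀) :
    (fun q : ℝ × ℝ => pcoord q.2 q.1) '' (Ioo 0 η₀ ×ˢ (univ : Set ℝ)) =
      {y : ℝ × ℝ | uu y ∈ Ioo 0 (η₀^2)} := by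
  ext y
  constructor
  · rintro ⟨⟨η, ξ⟩, ⟨hη, -⟩, rfl⟩
    simp only [mem_setOf_eq, uu_pcoord, mem_Ioo]
    exact ⟨pow_pos hη.1 2, by nlinarith [hη.1, hη.2]⟩
  · rintro ⟨h1, h2⟩
    refine ⟨(Real.sqrt (uu y), y.2 / Real.sqrt (uu y)), ⟨⟨Real.sqrt_pos.2 h1, ?_⟩, trivial⟩,
      pcoord_rep y h1⟩
    calc Real.sqrt (uu y) < Real.sqrt (η₀^2) := Real.sqrt_lt_sqrt (uu_nonneg y) h2
    _ = η₀ := Real.sqrt_sq hη₀.le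

lemma uu_continuous : Continuous uu := by
  unfold uu
  exact (((continuous_fst.pow 2).add (continuous_snd.pow 2)).sqrt).sub continuous_fst
/-- For f supported inside the parabola 𝒫_{η₀},
∫₀^∞ (ℛf)(x(ξ,η₀), r) K₀(kr) dr
= ∫₀^{η₀} ∫_{−∞}^∞ f*(ξ',η') K₀(k ρ(ξ,η₀,ξ',η')) dξ' dη'. -/
theorem sphMean_K0_parabolic (η₀ : ℝ) (hη₀ : 0 < η₀) (f : ℝ × ℝ → ℝ)
    (hf : Continuous f) (hsupp : HasCompactSupport f)
    (hvan : ∀ ξ η : ℝ, η₀ ≤ η → f (pcoord ξ η) = 0)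
    (k : ℝ) (hk : 0 < k) (ξ : ℝ) :
    ∫ r in Set.Ioi (0:ℝ), sphMean f (pcoord ξ η₀) r * K0 (k*r) =
      ∫ η' in (0:ℝ)..η₀, ∫ ξ' : ℝ,
        (ξ'^2 + η'^2) * f (pcoord ξ' η') *
          K0 (k * edist2 (pcoord ξ η₀) (pcoord ξ' η')) := by
  have hπ : (0:ℝ) < π := Real.pi_pos
  set x₀ : ℝ × ℝ := pcoord ξ η₀ with hx₀def
  obtain ⟨C, hC⟩ := hf.bounded_above_of_compact_support hsupp
  have hC0 : 0 ≤ C := le_trans (norm_nonneg _) (hC 0)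
  obtain ⟨R₁, hR₁⟩ := hsupp.isBounded.subset_closedBall (0 : ℝ × ℝ)
  have hfz : ∀ y : ℝ × ℝ, f y ≠ 0 → ‖y‖ ≤ R₁ := by
    intro y hy
    have h1 : y ∈ tsupport f := subset_tsupport f hy
    have h2 := hR₁ h1
    simpa [Metric.mem_closedBall, dist_zero_right] using h2
  set R₂ : ℝ := Real.sqrt ((R₁+|x₀.1|)^2 + (R₁+|x₀.2|)^2) with hR₂def
  have hPsupp : ∀ r θ : ℝ, 0 < r →
      f (x₀.1 + r * Real.cos θ, x₀.2 + r * Real.sin θ) ≠ 0 → r ≤ R₂ := by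
    intro r θ hr hne
    have h1 := hfz _ hne
    rw [Prod.norm_def] at h1
    simp only [Real.norm_eq_abs] at h1
    have ha := abs_le.1 (le_trans (le_max_left _ _) h1)
    have hb := abs_le.1 (le_trans (le_max_right _ _) h1)
    have hM1 : r * Real.cos θ ≤ R₁ + |x₀.1| := by linarith [neg_abs_le x₀.1]
    have hM1' : -(R₁ + |x₀.1|) ≤ r * Real.cos θ := by linarith [le_abs_self x₀.1]
    have hM2 : r * Real.sin θ ≤ R₁ + |x₀.2| := by linarith [neg_abs_le x₀.2]
    have hM2' : -(R₁ + |x₀.2|) ≤ r * Real.sin θ := by linarith [le_abs_self x₀.2]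
    have h4 : r^2 ≤ (R₁+|x₀.1|)^2 + (R₁+|x₀.2|)^2 := by
      nlinarith [Real.sin_sq_add_cos_sq θ]
    calc r = Real.sqrt (r^2) := (Real.sqrt_sq hr.le).symm
    _ ≤ R₂ := Real.sqrt_le_sqrt h4
  set gx : ℝ × ℝ → ℝ := fun p => f (x₀ + p) * K0 (k * Real.sqrt (p.1^2 + p.2^2)) with hgxdef
  set g : ℝ × ℝ → ℝ := fun y => f y * K0 (k * edist2 x₀ y) with hgdef
  set P : ℝ × ℝ → ℝ := fun p =>
    f (x₀.1 + p.1 * Real.cos p.2, x₀.2 + p.1 * Real.sin p.2) * p.1 * K0 (k * p.1) with hPdef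
  set M : ℝ := C * (Real.sqrt (2*π/k) * Real.sqrt R₂) with hMdef
  have hM0 : 0 ≤ M := mul_nonneg hC0 (by positivity)
  have hT : MeasurableSet (Ioi (0:ℝ) ×ˢ Ioo (-π) π) := measurableSet_Ioi.prod measurableSet_Ioo
  have hPcont : ContinuousOn P (Ioi (0:ℝ) ×ˢ Ioo (-π) π) := by
    apply ContinuousOn.mul
    · apply ContinuousOn.mul
      · refine (hf.comp ?_).continuousOn
        exact (continuous_const.add (continuous_fst.mul (Real.continuous_cos.comp
          continuous_snd))).prodMk (continuous_const.add (continuous_fst.mul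
          (Real.continuous_sin.comp continuous_snd)))
      · exact continuous_fst.continuousOn
    · refine K0_continuousOn.comp (continuous_const.mul continuous_fst).continuousOn ?_
      intro p hp
      exact mem_Ioi.2 (mul_pos hk hp.1)
  have hPbound : ∀ p ∈ Ioi (0:ℝ) ×ˢ Ioo (-π) π,
      ‖P p‖ ≤ (Ioc (0:ℝ) R₂ ×ˢ Ioo (-π) π).indicator (fun _ => M) p := by
    rintro ⟨r, θ⟩ ⟨hr, hθ⟩
    simp only [mem_Ioi] at hr
    by_cases hfr : f (x₀.1 + r * Real.cos θ, x₀.2 + r * Real.sin θ) = 0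
    · have : P (r, θ) = 0 := by simp [hPdef, hfr]
      rw [this, norm_zero]
      exact indicator_nonneg (fun _ _ => hM0) _
    · have hrR : r ≤ R₂ := hPsupp r θ hr hfr
      have hmem : (r, θ) ∈ Ioc (0:ℝ) R₂ ×ˢ Ioo (-π) π := ⟨⟨hr, hrR⟩, hθ⟩
      rw [indicator_of_mem hmem]
      have h1 : |f (x₀.1 + r * Real.cos θ, x₀.2 + r * Real.sin θ)| ≤ C := by
        simpa [Real.norm_eq_abs] using hC (x₀.1 + r * Real.cos θ, x₀.2 + r * Real.sin θ)
      have h2 : K0 (k*r) * r ≤ Real.sqrt (2*π/k) * Real.sqrt r := K0_mul_self_le hr hk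
      have h3 : Real.sqrt (2*π/k) * Real.sqrt r ≤ Real.sqrt (2*π/k) * Real.sqrt R₂ :=
        mul_le_mul_of_nonneg_left (Real.sqrt_le_sqrt hrR) (Real.sqrt_nonneg _)
      have h4 : ‖P (r, θ)‖ =
          |f (x₀.1 + r * Real.cos θ, x₀.2 + r * Real.sin θ)| * (K0 (k*r) * r) := by
        rw [hPdef]
        rw [Real.norm_eq_abs, abs_mul, abs_mul, abs_of_pos hr, abs_of_nonneg (K0_nonneg _)]
        ring
      rw [h4, hMdef]
      exact mul_le_mul h1 (h2.trans h3) (mul_nonneg (K0_nonneg _) hr.le) hC0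
  have hI1 : IntegrableOn P (Ioi (0:ℝ) ×ˢ Ioo (-π) π) := by
    have hSmeas : MeasurableSet (Ioc (0:ℝ) R₂ ×ˢ Ioo (-π) π) :=
      measurableSet_Ioc.prod measurableSet_Ioo
    have hSfin : volume (Ioc (0:ℝ) R₂ ×ˢ Ioo (-π) π) < ⊤ := by
      rw [Measure.volume_eq_prod, Measure.prod_prod]
      exact ENNReal.mul_lt_top measure_Ioc_lt_top measure_Ioo_lt_top
    have hbd : Integrable ((Ioc (0:ℝ) R₂ ×ˢ Ioo (-π) π).indicator (fun _ => M))
        (volume.restrict (Ioi (0:ℝ) ×ˢ Ioo (-π) π)) := by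
      rw [integrable_indicator_iff hSmeas]
      refine integrableOn_const ?_
      rw [Measure.restrict_apply hSmeas]
      exact (lt_of_le_of_lt (measure_mono inter_subset_left) hSfin).ne
    refine Integrable.mono' hbd (hPcont.aestronglyMeasurable hT) ?_
    rw [ae_restrict_iff' hT]
    exact Filter.Eventually.of_forall hPbound
  -- the pointwise identity on the polar target
  have hPeq : ∀ p ∈ polarCoord.target, p.1 • gx (polarCoord.symm p) = P p := by
    rintro ⟨r, θ⟩ hp
    have hr : 0 < r := hp.1
    rw [polarCoord_symm_apply]
    show r • (f (x₀ + (r * Real.cos θ, r * Real.sin θ)) *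
      K0 (k * Real.sqrt ((r * Real.cos θ)^2 + (r * Real.sin θ)^2))) = _
    have hsq : (r * Real.cos θ)^2 + (r * Real.sin θ)^2 = r^2 := by
      have h5 := Real.sin_sq_add_cos_sq θ
      linear_combination r^2 * h5
    rw [hsq, Real.sqrt_sq hr.le]
    have hxp : x₀ + (r * Real.cos θ, r * Real.sin θ) =
        (x₀.1 + r * Real.cos θ, x₀.2 + r * Real.sin θ) := rfl
    rw [hxp, smul_eq_mul, hPdef]
    ring
  -- integrability of gx
  have hgxInt : Integrable gx := by
    set B : ℝ × ℝ → ℝ × ℝ →L[ℝ] ℝ × ℝ := fun p =>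
      LinearMap.toContinuousLinearMap (Matrix.toLin (Module.Basis.finTwoProd ℝ) (Module.Basis.finTwoProd ℝ)
        !![Real.cos p.2, -p.1 * Real.sin p.2; Real.sin p.2, p.1 * Real.cos p.2]) with hBdef
    have hBd : ∀ p ∈ polarCoord.target,
        HasFDerivWithinAt polarCoord.symm (B p) polarCoord.target p := fun p _ =>
      (hasFDerivAt_polarCoord_symm p).hasFDerivWithinAt
    have hBdet : ∀ p ∈ polarCoord.target, |(B p).det| = p.1 := by
      rintro ⟨r, θ⟩ hp
      have hdet : (B (r, θ)).det = r := by
        rw [hBdef]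
        simp only [ContinuousLinearMap.det, LinearMap.coe_toContinuousLinearMap,
          LinearMap.det_toLin, Matrix.det_fin_two_of]
        have := Real.sin_sq_add_cos_sq θ
        linear_combination r * this
      rw [hdet]
      exact abs_of_pos hp.1
    have hinj : InjOn polarCoord.symm polarCoord.target := by
      have := polarCoord.symm.injOn
      rwa [OpenPartialHomeomorph.symm_source] at this
    have himg : polarCoord.symm '' polarCoord.target = polarCoord.source :=
      polarCoord.symm_image_target_eq_source
    have hiff := integrableOn_image_iff_integrableOn_abs_det_fderiv_smul volume
      polarCoord.open_target.measurableSet hBd hinj gx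
    rw [himg] at hiff
    have htgt : IntegrableOn (fun p => |(B p).det| • gx (polarCoord.symm p))
        polarCoord.target := by
      have hI1' : IntegrableOn P polarCoord.target := by
        rw [polarCoord_target]; exact hI1
      refine hI1'.congr_fun ?_ polarCoord.open_target.measurableSet
      intro p hp
      show P p = |(B p).det| • gx (polarCoord.symm p)
      rw [hBdet p hp]
      exact (hPeq p hp).symm
    have hsrc : IntegrableOn gx polarCoord.source := hiff.2 htgt
    rw [← integrableOn_univ]
    exact hsrc.congr_set_ae polarCoord_source_ae_eq_univ.symm
  -- relation between gx and g
  have hgxg : gx = fun p => g (x₀ + p) := by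
    funext p
    rw [hgxdef, hgdef]
    show f (x₀ + p) * K0 (k * Real.sqrt (p.1^2 + p.2^2)) =
      f (x₀ + p) * K0 (k * edist2 x₀ (x₀ + p))
    have h3 : edist2 x₀ (x₀ + p) = Real.sqrt (p.1^2 + p.2^2) := by
      unfold edist2
      have e1 : (x₀ + p).1 = x₀.1 + p.1 := rfl
      have e2 : (x₀ + p).2 = x₀.2 + p.2 := rfl
      rw [e1, e2]
      congr 1
      ring
    rw [h3]
  have hgInt : Integrable g := by
    have hgg : g = fun y => gx (y - x₀) := by
      rw [hgxg]
      funext y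
      simp
    rw [hgg]
    exact hgxInt.comp_sub_right x₀
  -- LHS = ∫ g
  have hLHS : (∫ r in Set.Ioi (0:ℝ), sphMean f x₀ r * K0 (k*r)) = ∫ y, g y := by
    calc ∫ r in Set.Ioi (0:ℝ), sphMean f x₀ r * K0 (k*r)
        = ∫ r in Set.Ioi (0:ℝ), ∫ θ in Ioo (-π) π, P (r, θ) := by
          apply setIntegral_congr_fun measurableSet_Ioi
          intro r _
          show sphMean f x₀ r * K0 (k*r) = _
          unfold sphMean
          rw [← intervalIntegral.integral_mul_const,
            intervalIntegral.integral_of_le (by linarith : -π ≤ π),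
            integral_Ioc_eq_integral_Ioo]
      _ = ∫ p in Ioi (0:ℝ) ×ˢ Ioo (-π) π, P p := by
          exact (setIntegral_prod P hI1).symm
      _ = ∫ p in polarCoord.target, p.1 • gx (polarCoord.symm p) := by
          rw [polarCoord_target]
          exact (setIntegral_congr_fun hT (fun p hp => hPeq p (by rwa [polarCoord_target]))).symm
      _ = ∫ p, gx p := integral_comp_polarCoord_symm gx
      _ = ∫ y, g y := by
          rw [hgxg]
          exact integral_add_left_eq_self g x₀
  -- RHS = ∫ g
  have hΩmeas : MeasurableSet {y : ℝ × ℝ | uu y ∈ Ioo 0 (η₀^2)} :=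
    uu_continuous.measurable measurableSet_Ioo
  have hs : MeasurableSet (Ioo (0:ℝ) η₀ ×ˢ (univ : Set ℝ)) :=
    measurableSet_Ioo.prod MeasurableSet.univ
  have hPhiD : ∀ p ∈ Ioo (0:ℝ) η₀ ×ˢ (univ : Set ℝ),
      HasFDerivWithinAt (fun q : ℝ × ℝ => pcoord q.2 q.1) (DPhi p)
        (Ioo (0:ℝ) η₀ ×ˢ (univ : Set ℝ)) p := fun p _ =>
    (hasFDerivAt_Phi p).hasFDerivWithinAt
  have hFeq : (fun p : ℝ × ℝ => |(DPhi p).det| • g (pcoord p.2 p.1)) =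
      fun p : ℝ × ℝ => (p.2^2 + p.1^2) * f (pcoord p.2 p.1) *
        K0 (k * edist2 x₀ (pcoord p.2 p.1)) := by
    funext p
    rw [DPhi_det, abs_neg, abs_of_nonneg (by positivity), smul_eq_mul]
    simp only [hgdef]
    ring
  have himg2 := image_Phi (η₀ := η₀) hη₀
  have hnull : volume {y : ℝ × ℝ | y.2 = 0} = 0 := by
    have h1 : {y : ℝ × ℝ | y.2 = 0} = (univ : Set ℝ) ×ˢ ({0} : Set ℝ) := by
      ext y
      simp only [mem_setOf_eq, Set.mem_prod, mem_univ, mem_singleton_iff, true_and]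
    rw [h1, Measure.volume_eq_prod, Measure.prod_prod, Real.volume_singleton, mul_zero]
  have hzero : (∫ y in {y : ℝ × ℝ | uu y ∈ Ioo 0 (η₀^2)}ᶜ, g y) = 0 := by
    apply integral_eq_zero_of_ae
    rw [Filter.EventuallyEq, ae_restrict_iff' hΩmeas.compl]
    have hae : ∀ᵐ y : ℝ × ℝ, y.2 ≠ 0 := by
      rw [ae_iff]
      simpa using hnull
    filter_upwards [hae] with y hy2 hyc
    rcases eq_or_lt_of_le (uu_nonneg y) with h | h
    · exact absurd (uu_eq_zero h.symm) hy2
    · have hge : η₀^2 ≤ uu y := by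
        by_contra hlt
        exact hyc ⟨h, lt_of_not_ge hlt⟩
      have hsq : η₀ ≤ Real.sqrt (uu y) := by
        rw [show η₀ = Real.sqrt (η₀^2) from (Real.sqrt_sq hη₀.le).symm]
        exact Real.sqrt_le_sqrt hge
      have hfy : f y = 0 := by
        conv_lhs => rw [← pcoord_rep y h]
        exact hvan _ _ hsq
      show g y = (0 : (ℝ × ℝ) → ℝ) y
      rw [hgdef]
      simp only [Pi.zero_apply]
      show f y * K0 (k * edist2 x₀ y) = 0
      rw [hfy, zero_mul]
  have hRHS : (∫ η' in (0:ℝ)..η₀, ∫ ξ' : ℝ,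
      (ξ'^2 + η'^2) * f (pcoord ξ' η') * K0 (k * edist2 x₀ (pcoord ξ' η'))) = ∫ y, g y := by
    have hgimg : IntegrableOn g
        ((fun q : ℝ × ℝ => pcoord q.2 q.1) '' (Ioo (0:ℝ) η₀ ×ˢ (univ : Set ℝ))) := by
      rw [himg2]
      exact hgInt.integrableOn
    have hiff2 := integrableOn_image_iff_integrableOn_abs_det_fderiv_smul volume hs hPhiD
      pcoord_injOn g
    have hFint : IntegrableOn
        (fun p : ℝ × ℝ => (p.2^2 + p.1^2) * f (pcoord p.2 p.1) *
          K0 (k * edist2 x₀ (pcoord p.2 p.1))) (Ioo (0:ℝ) η₀ ×ˢ (univ : Set ℝ)) := by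
      rw [← hFeq]
      exact hiff2.1 hgimg
    calc ∫ η' in (0:ℝ)..η₀, ∫ ξ' : ℝ,
        (ξ'^2 + η'^2) * f (pcoord ξ' η') * K0 (k * edist2 x₀ (pcoord ξ' η'))
        = ∫ η' in Ioo (0:ℝ) η₀, ∫ ξ' : ℝ,
            (ξ'^2 + η'^2) * f (pcoord ξ' η') * K0 (k * edist2 x₀ (pcoord ξ' η')) := by
          rw [intervalIntegral.integral_of_le hη₀.le, integral_Ioc_eq_integral_Ioo]
      _ = ∫ p in Ioo (0:ℝ) η₀ ×ˢ (univ : Set ℝ),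
            (p.2^2 + p.1^2) * f (pcoord p.2 p.1) * K0 (k * edist2 x₀ (pcoord p.2 p.1)) := by
          have h := setIntegral_prod (μ := volume) (ν := volume)
            (fun p : ℝ × ℝ => (p.2^2 + p.1^2) * f (pcoord p.2 p.1) *
              K0 (k * edist2 x₀ (pcoord p.2 p.1))) hFint
          rw [Measure.restrict_univ] at h
          exact h.symm
      _ = ∫ p in Ioo (0:ℝ) η₀ ×ˢ (univ : Set ℝ), |(DPhi p).det| • g (pcoord p.2 p.1) := by
          rw [hFeq]
      _ = ∫ y in (fun q : ℝ × ℝ => pcoord q.2 q.1) '' (Ioo (0:ℝ) η₀ ×ˢ (univ : Set ℝ)),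
            g y := by
          exact (integral_image_eq_integral_abs_det_fderiv_smul volume hs hPhiD
            pcoord_injOn g).symm
      _ = ∫ y in {y : ℝ × ℝ | uu y ∈ Ioo 0 (η₀^2)}, g y := by rw [himg2]
      _ = ∫ y, g y := by
          rw [← integral_add_compl hΩmeas hgInt, hzero, add_zero]
  rw [hLHS, hRHS]
end
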